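/- arXiv:math/0401181 — 2 statements merged into one kernel-verified Lean document; each statement's English description precedes it below -/
import Mathlib

section
/- The natural algebra homomorphism F_{q^d}(τ) ⊗_{F_q(t)} F_q((t)) → F_{q^d}((τ)), f ⊗ g ↦ f·g, is an isomorphism of F_q((t))-algebras, where F_{q^d}((τ)) is the skew Laurent series ring with τλ = λ^q τ; in particular F_{q^d}((τ)) is a skew field of dimension d² over F_q((t)). -/
open scoped TensorProduct
open scoped RatFunc


/-- A characterization of the skew polynomial ring `K{τ}` (for `K = F_{q^d}`) with commutation
rule `τ·λ = λ^q·τ`: a ring `R` together with coefficient maps `c n : R →+ K` such that elements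
are uniquely determined by their (finitely supported) coefficients, every finitely supported
family of coefficients occurs, `1` and `τ` have the expected coefficients, and multiplication
is the twisted convolution `c_n(x·y) = Σ_{i=0}^n c_i(x)·c_{n-i}(y)^{q^i}` (which encodes
`τλ = λ^q τ`). -/
structure IsSkewPolyRing (q : ℕ) (K : Type) [Field K] (R : Type) [Ring R]
    (c : ℕ → R →+ K) (τ : R) : Prop where
  inj : Function.Injective fun (x : R) (n : ℕ) => c n x
  support_finite : ∀ x : R, (Function.support fun n => c n x).Finite
  surj : ∀ f : ℕ →₀ K, ∃ x : R, ∀ n, c n x = f n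
  coeff_one : ∀ n, c n (1 : R) = if n = 0 then 1 else 0
  coeff_tau : ∀ n, c n τ = if n = 1 then 1 else 0
  coeff_mul : ∀ x y : R, ∀ n,
    c n (x * y) = ∑ i ∈ Finset.range (n + 1), c i x * c (n - i) y ^ q ^ i

/-- A characterization of the skew Laurent series ring `K((τ))` (for `K = F_{q^d}`, with
`τλ = λ^q τ`, so `τ^{-1}λ = λ^{q^{-1}}τ^{-1}`): coefficients are indexed by `ℤ`, supports
are bounded below, and multiplication is the twisted convolution
`c_n(x·y) = Σ_{i+j=n} c_i(x)·c_j(y)^{q^i}`, where for `λ ∈ F_{q^d}` the Frobenius iterate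
`λ^{q^i}` for `i ∈ ℤ` equals `λ^{q^{i mod d}}` (as `λ^{q^d} = λ`). -/
structure IsSkewLaurentRing (q d : ℕ) (K : Type) [Field K] (S : Type) [Ring S]
    (c : ℤ → S →+ K) (τ : S) : Prop where
  inj : Function.Injective fun (x : S) (n : ℤ) => c n x
  bddBelow : ∀ x : S, ∃ N : ℤ, ∀ n < N, c n x = 0
  surj : ∀ f : ℤ → K, (∃ N : ℤ, ∀ n < N, f n = 0) → ∃ x : S, ∀ n, c n x = f n
  coeff_one : ∀ n, c n (1 : S) = if n = 0 then 1 else 0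
  coeff_tau : ∀ n, c n τ = if n = 1 then 1 else 0
  coeff_mul : ∀ x y : S, ∀ n : ℤ,
    c n (x * y) = ∑ᶠ p : ℤ × ℤ,
      if p.1 + p.2 = n then c p.1 x * c p.2 y ^ q ^ (p.1 % (d : ℤ)).toNat else 0

open scoped TensorProduct

section Aux

variable {q : ℕ} {K : Type} [Field K] {R : Type} [Ring R]
  {cR : ℕ → R →+ K} {τR : R}

namespace IsSkewPolyRing

variable (hR : IsSkewPolyRing q K R cR τR)
include hR

theorem coeff_tau_pow (hq0 : q ≠ 0) (i : ℕ) : ∀ n, cR n (τR ^ i) = if n = i then 1 else 0 := by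
  induction i with
  | zero => simpa using hR.coeff_one
  | succ i ih =>
    intro n
    rw [pow_succ, hR.coeff_mul]
    rcases le_or_gt i n with hin | hin
    · rw [Finset.sum_eq_single i]
      · rw [ih, if_pos rfl, hR.coeff_tau, one_mul]
        rcases eq_or_ne n (i+1) with rfl | hne
        · simp [Nat.succ_sub_one]
        · rw [if_neg hne, if_neg, zero_pow (pow_ne_zero _ hq0)]
          omega
      · intro b _ hb; rw [ih, if_neg hb, zero_mul]
      · intro h; exact absurd (Finset.mem_range.2 (by omega)) h
    · rw [Finset.sum_eq_zero, if_neg (by omega)]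
      intro b hb
      rw [ih, if_neg (by simp at hb; omega), zero_mul]

theorem coeff_iota_tau_pow (hq0 : q ≠ 0) {ι : K →+* R} (hι : ∀ (a : K) (n : ℕ), cR n (ι a) = if n = 0 then a else 0)
    (a : K) (i : ℕ) : ∀ n, cR n (ι a * τR ^ i) = if n = i then a else 0 := by
  intro n
  rw [hR.coeff_mul, Finset.sum_eq_single 0]
  · rw [hι, if_pos rfl, hR.coeff_tau_pow hq0, Nat.sub_zero, pow_zero, pow_one]
    split <;> simp
  · intro b _ hb; rw [hι, if_neg hb, zero_mul]
  · simp

/-- commutation -/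
theorem tau_mul_iota (hq0 : q ≠ 0) {ι : K →+* R} (hι : ∀ (a : K) (n : ℕ), cR n (ι a) = if n = 0 then a else 0)
    (a : K) : τR * ι a = ι (a ^ q) * τR := by
  apply hR.inj
  funext n
  show cR n (τR * ι a) = cR n (ι (a ^ q) * τR)
  have h2 : cR n (ι (a ^ q) * τR) = if n = 1 then a ^ q else 0 := by
    have := hR.coeff_iota_tau_pow hq0 hι (a ^ q) 1 n
    rwa [pow_one] at this
  rw [h2, hR.coeff_mul]
  rcases eq_or_ne n 1 with rfl | hne
  · rw [if_pos rfl, Finset.sum_eq_single 1]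
    · simp [hR.coeff_tau, hι]
    · intro b _ hb1; rw [hR.coeff_tau, if_neg hb1, zero_mul]
    · simp
  · rw [if_neg hne, Finset.sum_eq_zero]
    intro b hb
    rcases eq_or_ne b 1 with rfl | hb1
    · rw [hι, if_neg (by simp at hb; omega), zero_pow (pow_ne_zero _ hq0), mul_zero]
    · rw [hR.coeff_tau, if_neg hb1, zero_mul]

theorem tau_pow_mul_iota (hq0 : q ≠ 0) {ι : K →+* R} (hι : ∀ (a : K) (n : ℕ), cR n (ι a) = if n = 0 then a else 0)
    (m : ℕ) : ∀ a : K, τR ^ m * ι a = ι (a ^ q ^ m) * τR ^ m := by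
  induction m with
  | zero => simp
  | succ m ih =>
    intro a
    rw [pow_succ, mul_assoc, hR.tau_mul_iota hq0 hι, ← mul_assoc, ih, mul_assoc, ← pow_succ,
      ← pow_mul, ← pow_succ']

end IsSkewPolyRing

end Aux
section Aux2

/-- Construct a Laurent series from a bounded-below coefficient function. -/
def mkLaurent {F : Type} [Zero F] (f : ℤ → F) (N : ℤ) (h : ∀ n < N, f n = 0) : LaurentSeries F :=
  ⟨f, Set.IsWF.isPWO (BddBelow.wellFoundedOn_lt
    ⟨N, fun x hx => le_of_not_gt fun hlt => hx (h x hlt)⟩)⟩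

@[simp] lemma mkLaurent_coeff {F : Type} [Zero F] (f : ℤ → F) (N : ℤ)
    (h : ∀ n < N, f n = 0) : (mkLaurent f N h).coeff = f := rfl

lemma pow_q_pow_d_mul {q d : ℕ} {K : Type} [Field K] [Fintype K]
    (hK : Fintype.card K = q ^ d) (a : K) (m : ℕ) : a ^ q ^ (d * m) = a := by
  induction m with
  | zero => simp
  | succ m ih =>
    rw [Nat.mul_succ, pow_add, pow_mul, ih, ← hK, FiniteField.pow_card]

section Slemmas

variable {Fq K R S : Type} [Field Fq] [Fintype Fq] [Field K] [Fintype K] [Algebra Fq K]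
  [Ring R] [Ring S]
  {q d : ℕ}
  {cR : ℕ → R →+ K} {τR : R}
  {cS : ℤ → S →+ K} {τS : S}

namespace IsSkewLaurentRing

variable (hS : IsSkewLaurentRing q d K S cS τS)
include hS

theorem coeff_j_iota_tau_pow (hq0 : q ≠ 0) (hR : IsSkewPolyRing q K R cR τR)
    {ι : K →+* R} (hι : ∀ (a : K) (n : ℕ), cR n (ι a) = if n = 0 then a else 0)
    {j : R →+* S} (hj : ∀ (r : R) (n : ℤ), cS n (j r) = if h : 0 ≤ n then cR n.toNat r else 0)
    (a : K) (i : ℕ) (n : ℤ) :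
    cS n (j (ι a * τR ^ i)) = if n = (i : ℤ) then a else 0 := by
  rw [hj]
  split
  · rw [hR.coeff_iota_tau_pow hq0 hι]
    next h => -- 0 ≤ n
      rcases eq_or_ne n (i : ℤ) with rfl | hne
      · simp
      · rw [if_neg (by omega), if_neg hne]
  · rw [if_neg (by omega)]

theorem zero_ne_one' (hq0 : q ≠ 0) : (0 : S) ≠ 1 := by
  intro h
  have := hS.coeff_one (q := q) (d := d) 0
  rw [← h, if_pos rfl] at this
  simp at this

/-- The coefficients of `algebraMap f * j (ι a * τR ^ i)`. -/
theorem coeff_alg_mul (hq0 : q ≠ 0) (hR : IsSkewPolyRing q K R cR τR)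
    {ι : K →+* R} (hι : ∀ (a : K) (n : ℕ), cR n (ι a) = if n = 0 then a else 0)
    {j : R →+* S} (hj : ∀ (r : R) (n : ℤ), cS n (j r) = if h : 0 ≤ n then cR n.toNat r else 0)
    [Algebra (LaurentSeries Fq) S]
    (halgS : ∀ (f : LaurentSeries Fq) (n : ℤ),
      cS n (algebraMap (LaurentSeries Fq) S f) =
        if (d : ℤ) ∣ n then algebraMap Fq K (f.coeff (n / d)) else 0)
    (f : LaurentSeries Fq) (a : K) (i : ℕ) (n : ℤ) :
    cS n (algebraMap (LaurentSeries Fq) S f * j (ι a * τR ^ i)) =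
      if (d : ℤ) ∣ (n - i) then algebraMap Fq K (f.coeff ((n - i) / d)) * a else 0 := by
  rw [hS.coeff_mul]
  rw [finsum_eq_single _ (n - (i : ℤ), (i : ℤ))]
  · rw [if_pos (by ring), halgS, hS.coeff_j_iota_tau_pow hq0 hR hι hj, if_pos rfl]
    rcases em ((d : ℤ) ∣ n - i) with hdvd | hdvd
    · rw [if_pos hdvd, if_pos hdvd, Int.emod_eq_zero_of_dvd hdvd]
      simp
    · rw [if_neg hdvd, if_neg hdvd, zero_mul]
  · rintro ⟨p1, p2⟩ hp
    rcases eq_or_ne (p1 + p2) n with hsum | hsum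
    · rw [if_pos hsum, hS.coeff_j_iota_tau_pow hq0 hR hι hj, if_neg, zero_pow (pow_ne_zero _ hq0),
        mul_zero]
      intro h
      exact hp (by simp [h, ← hsum, Prod.ext_iff]; omega)
    · rw [if_neg hsum]

end IsSkewLaurentRing

end Slemmas

end Aux2
section Slemmas2

variable {Fq K R S : Type} [Field Fq] [Fintype Fq] [Field K] [Fintype K] [Algebra Fq K]
  [Ring R] [Ring S]
  {q d : ℕ}
  {cR : ℕ → R →+ K} {τR : R}
  {cS : ℤ → S →+ K} {τS : S}

namespace IsSkewLaurentRing

variable (hS : IsSkewLaurentRing q d K S cS τS)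
include hS

theorem eq_zero_of_coeff_eq_zero {x : S} (h : ∀ n, cS n x = 0) : x = 0 := by
  apply hS.inj
  funext n
  simp [h n]

theorem mul_ne_zero'' (hq0 : q ≠ 0) {x y : S} (hx : x ≠ 0) (hy : y ≠ 0) : x * y ≠ 0 := by
  have key : ∀ z : S, z ≠ 0 → ∃ m : ℤ, cS m z ≠ 0 ∧ ∀ k < m, cS k z = 0 := by
    intro z hz
    obtain ⟨N, hN⟩ := hS.bddBelow z
    have hne : ∃ m : ℤ, cS m z ≠ 0 := by
      by_contra h
      push_neg at h
      exact hz (hS.eq_zero_of_coeff_eq_zero h)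
    obtain ⟨m, hm, hmin⟩ := Int.exists_least_of_bdd (P := fun m => cS m z ≠ 0)
      ⟨N, fun z' hz' => le_of_not_gt fun hlt => hz' (hN _ hlt)⟩ hne
    exact ⟨m, hm, fun k hk => by_contra fun hne' => absurd (hmin k hne') (by omega)⟩
  obtain ⟨mx, hmx, hmxmin⟩ := key x hx
  obtain ⟨my, hmy, hmymin⟩ := key y hy
  intro h0
  have : cS (mx + my) (x * y) = 0 := by rw [h0]; simp
  rw [hS.coeff_mul, finsum_eq_single _ (mx, my)] at this
  · rw [if_pos rfl] at this
    exact absurd this (mul_ne_zero hmx (pow_ne_zero _ hmy))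
  · rintro ⟨p1, p2⟩ hp
    rcases eq_or_ne (p1 + p2) (mx + my) with hsum | hsum
    · rw [if_pos hsum]
      rcases lt_or_ge p1 mx with h1 | h1
      · rw [hmxmin _ h1, zero_mul]
      · have h2 : p2 < my := by
          rcases lt_or_eq_of_le h1 with h1' | h1'
          · omega
          · exact absurd (by simp [← h1', Prod.ext_iff]; omega) hp
        rw [hmymin _ h2, zero_pow (pow_ne_zero _ hq0), mul_zero]
    · rw [if_neg hsum]

/-- Coefficient of a linear combination `∑ p, g p • j (ι (bK p.2) * τR ^ p.1)`. -/
theorem coeff_sum_smul (hq0 : q ≠ 0) (hd : 0 < d) (hR : IsSkewPolyRing q K R cR τR)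
    {ι : K →+* R} (hι : ∀ (a : K) (n : ℕ), cR n (ι a) = if n = 0 then a else 0)
    {j : R →+* S} (hj : ∀ (r : R) (n : ℤ), cS n (j r) = if h : 0 ≤ n then cR n.toNat r else 0)
    [Algebra (LaurentSeries Fq) S]
    (halgS : ∀ (f : LaurentSeries Fq) (n : ℤ),
      cS n (algebraMap (LaurentSeries Fq) S f) =
        if (d : ℤ) ∣ n then algebraMap Fq K (f.coeff (n / d)) else 0)
    (bK : Module.Basis (Fin d) Fq K)
    (g : Fin d × Fin d → LaurentSeries Fq) (n : ℤ) (i0 : Fin d) (hi0 : ((i0 : ℕ) : ℤ) = n % d) :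
    cS n (∑ p : Fin d × Fin d, g p • j (ι (bK p.2) * τR ^ (p.1 : ℕ))) =
      ∑ l : Fin d,
        algebraMap Fq K ((g (i0, l)).coeff (n / d)) * bK l := by
  have hd' : (d : ℤ) ≠ 0 := by exact_mod_cast hd.ne'
  have hdpos : (0 : ℤ) < d := by exact_mod_cast hd
  have hnn : 0 ≤ n % d := Int.emod_nonneg n hd'
  have hlt : n % d < d := Int.emod_lt_of_pos n hdpos
  have hsub : n - n % d = d * (n / d) := by
    have := Int.emod_def n d
    linarith
  rw [map_sum, Fintype.sum_prod_type]
  have hterm : ∀ (i l : Fin d),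
      cS n (g (i, l) • j (ι (bK l) * τR ^ (i : ℕ))) =
        if (d : ℤ) ∣ (n - i) then
          algebraMap Fq K ((g (i, l)).coeff ((n - i) / d)) * bK l else 0 := by
    intro i l
    rw [Algebra.smul_def, hS.coeff_alg_mul hq0 hR hι hj halgS]
  rw [Finset.sum_eq_single i0]
  · refine Finset.sum_congr rfl fun l _ => ?_
    rw [hterm, hi0, hsub, if_pos (Dvd.intro _ rfl), Int.mul_ediv_cancel_left _ hd']
  · intro i _ hi
    apply Finset.sum_eq_zero
    intro l _
    rw [hterm, if_neg]
    intro hdvd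
    apply hi
    have hinn : (0 : ℤ) ≤ (i : ℕ) := by positivity
    have hilt : ((i : ℕ) : ℤ) < d := by exact_mod_cast i.2
    have hdvd' : (d : ℤ) ∣ (n % d - (i : ℕ)) := by
      have h0 : (n - (i : ℕ)) % d = 0 := Int.emod_eq_zero_of_dvd hdvd
      rw [Int.sub_emod] at h0
      have h1 : ((i : ℕ) : ℤ) % d = (i : ℕ) := Int.emod_eq_of_lt hinn hilt
      rw [h1] at h0
      exact Int.dvd_of_emod_eq_zero h0
    have hz : n % d - ((i : ℕ) : ℤ) = 0 :=
      Int.eq_zero_of_abs_lt_dvd hdvd' (abs_lt.2 ⟨by omega, by omega⟩)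
    have h3 : ((i : ℕ) : ℤ) = n % d := by omega
    have h4 : (((i0 : ℕ) : ℤ)) = n % d := hi0
    exact Fin.ext (by omega)
  · intro h
    exact absurd (Finset.mem_univ _) h

end IsSkewLaurentRing

end Slemmas2
section Rspan

variable {Fq K R : Type} [Field Fq] [Fintype Fq] [Field K] [Fintype K] [Algebra Fq K]
  [Ring R] {q d : ℕ} {cR : ℕ → R →+ K} {τR : R}

namespace IsSkewPolyRing

variable (hR : IsSkewPolyRing q K R cR τR)
include hR

theorem eq_sum_coeff {ι : K →+* R} (hq0 : q ≠ 0)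
    (hι : ∀ (a : K) (n : ℕ), cR n (ι a) = if n = 0 then a else 0) (r : R) :
    r = ∑ n ∈ (hR.support_finite r).toFinset, ι (cR n r) * τR ^ n := by
  apply hR.inj
  funext m
  show cR m r = cR m _
  rw [map_sum]
  rw [Finset.sum_congr rfl fun n _ => hR.coeff_iota_tau_pow hq0 hι (cR n r) n m]
  rw [Finset.sum_ite_eq]
  split
  · rfl
  · next h =>
    by_contra h2
    exact h ((hR.support_finite r).mem_toFinset.2 h2)

theorem smul_gen (hq0 : q ≠ 0) (hK : Fintype.card K = q ^ d)
    {ι : K →+* R} (hι : ∀ (a : K) (n : ℕ), cR n (ι a) = if n = 0 then a else 0)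
    [Algebra (Polynomial Fq) R]
    (halg : ∀ p : Polynomial Fq,
      algebraMap (Polynomial Fq) R p =
        p.sum fun n a => ι (algebraMap Fq K a) * τR ^ (d * n))
    (α : Fq) (b : K) (m i : ℕ) :
    (Polynomial.monomial m α) • (ι b * τR ^ i) = ι (α • b) * τR ^ (d * m + i) := by
  rw [Algebra.smul_def, halg, Polynomial.sum_monomial_index _ _ (by simp),
    mul_assoc, ← mul_assoc (τR ^ (d * m)), hR.tau_pow_mul_iota hq0 hι,
    pow_q_pow_d_mul hK, mul_assoc (ι b), ← pow_add, ← mul_assoc, ← map_mul, ← Algebra.smul_def]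

theorem mem_span (hq0 : q ≠ 0) (hd : 0 < d) (hK : Fintype.card K = q ^ d)
    {ι : K →+* R} (hι : ∀ (a : K) (n : ℕ), cR n (ι a) = if n = 0 then a else 0)
    [Algebra (Polynomial Fq) R]
    (halg : ∀ p : Polynomial Fq,
      algebraMap (Polynomial Fq) R p =
        p.sum fun n a => ι (algebraMap Fq K a) * τR ^ (d * n))
    (bK : Module.Basis (Fin d) Fq K) (r : R) :
    r ∈ Submodule.span (Polynomial Fq)
      (Set.range fun p : Fin d × Fin d => ι (bK p.2) * τR ^ (p.1 : ℕ)) := by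
  have key : ∀ (a : K) (n : ℕ), ι a * τR ^ n ∈ Submodule.span (Polynomial Fq)
      (Set.range fun p : Fin d × Fin d => ι (bK p.2) * τR ^ (p.1 : ℕ)) := by
    intro a n
    have hrepr : a = ∑ l : Fin d, (bK.repr a l) • bK l := (bK.sum_repr a).symm
    have expand : ι a * τR ^ n =
        ∑ l : Fin d, ι ((bK.repr a l) • bK l) * τR ^ n := by
      conv_lhs => rw [hrepr]
      rw [map_sum, Finset.sum_mul]
    rw [expand]
    apply Submodule.sum_mem
    intro l _
    have hn : d * (n / d) + n % d = n := Nat.div_add_mod n d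
    rw [← hn, ← hR.smul_gen hq0 hK hι halg]
    exact Submodule.smul_mem _ _ (Submodule.subset_span
      ⟨(⟨n % d, Nat.mod_lt n hd⟩, l), rfl⟩)
  rw [show r = _ from hR.eq_sum_coeff hq0 hι r]
  exact Submodule.sum_mem _ fun n _ => key _ n

end IsSkewPolyRing

end Rspan
section Sbasis

variable {Fq K R S : Type} [Field Fq] [Fintype Fq] [Field K] [Fintype K] [Algebra Fq K]
  [Ring R] [Ring S] {q d : ℕ} {cR : ℕ → R →+ K} {τR : R} {cS : ℤ → S →+ K} {τS : S}

namespace IsSkewLaurentRing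

variable (hS : IsSkewLaurentRing q d K S cS τS)
include hS

theorem exists_repr (hq0 : q ≠ 0) (hd : 0 < d) (hR : IsSkewPolyRing q K R cR τR)
    {ι : K →+* R} (hι : ∀ (a : K) (n : ℕ), cR n (ι a) = if n = 0 then a else 0)
    {j : R →+* S} (hj : ∀ (r : R) (n : ℤ), cS n (j r) = if h : 0 ≤ n then cR n.toNat r else 0)
    [Algebra (LaurentSeries Fq) S]
    (halgS : ∀ (f : LaurentSeries Fq) (n : ℤ),
      cS n (algebraMap (LaurentSeries Fq) S f) =
        if (d : ℤ) ∣ n then algebraMap Fq K (f.coeff (n / d)) else 0)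
    (bK : Module.Basis (Fin d) Fq K) (x : S) :
    ∃ g : Fin d × Fin d → LaurentSeries Fq,
      x = ∑ p : Fin d × Fin d, g p • j (ι (bK p.2) * τR ^ (p.1 : ℕ)) := by
  have hd' : (d : ℤ) ≠ 0 := by exact_mod_cast hd.ne'
  have hdpos : (0 : ℤ) < d := by exact_mod_cast hd
  obtain ⟨N, hN⟩ := hS.bddBelow x
  have hbd : ∀ p : Fin d × Fin d, ∀ m : ℤ, m < min 0 (N - d) →
      (fun m => (bK.repr (cS ((d : ℤ) * m + (p.1 : ℕ)) x) p.2 : Fq)) m = 0 := by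
    intro p m hm
    have h1 : (d : ℤ) * m ≤ m := by nlinarith [hdpos, le_of_lt (lt_of_lt_of_le hm (min_le_left _ _))]
    have h2 : ((p.1 : ℕ) : ℤ) < d := by exact_mod_cast p.1.2
    have : (d : ℤ) * m + (p.1 : ℕ) < N := by
      have := lt_of_lt_of_le hm (min_le_right _ _)
      omega
    simp [hN _ this]
  refine ⟨fun p => mkLaurent _ _ (hbd p), ?_⟩
  apply hS.inj
  funext n
  show cS n x = cS n _
  have hnn : 0 ≤ n % d := Int.emod_nonneg n hd'
  have hlt : n % d < d := Int.emod_lt_of_pos n hdpos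
  have i0lt : (n % d).toNat < d := by omega
  have hi0 : (((⟨(n % d).toNat, i0lt⟩ : Fin d) : ℕ) : ℤ) = n % d := by
    simp only [Fin.val_mk]
    exact Int.toNat_of_nonneg hnn
  rw [hS.coeff_sum_smul hq0 hd hR hι hj halgS bK _ n _ hi0]
  have hidx : (d : ℤ) * (n / d) + (((⟨(n % d).toNat, i0lt⟩ : Fin d) : ℕ) : ℤ) = n := by
    rw [hi0]
    exact Int.mul_ediv_add_emod n d
  have hcoeff : ∀ l : Fin d,
      algebraMap Fq K ((mkLaurent _ _ (hbd (⟨(n % d).toNat, i0lt⟩, l))).coeff (n / d)) * bK l =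
        (bK.repr (cS n x) l) • bK l := by
    intro l
    rw [← Algebra.smul_def]
    congr 2
    show (bK.repr (cS ((d : ℤ) * (n / d) + ((⟨(n % d).toNat, i0lt⟩ : Fin d) : ℕ)) x) l : Fq) = _
    rw [hidx]
  rw [Finset.sum_congr rfl fun l _ => hcoeff l, Module.Basis.sum_repr]

theorem linearIndep (hq0 : q ≠ 0) (hd : 0 < d) (hR : IsSkewPolyRing q K R cR τR)
    {ι : K →+* R} (hι : ∀ (a : K) (n : ℕ), cR n (ι a) = if n = 0 then a else 0)
    {j : R →+* S} (hj : ∀ (r : R) (n : ℤ), cS n (j r) = if h : 0 ≤ n then cR n.toNat r else 0)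
    [Algebra (LaurentSeries Fq) S]
    (halgS : ∀ (f : LaurentSeries Fq) (n : ℤ),
      cS n (algebraMap (LaurentSeries Fq) S f) =
        if (d : ℤ) ∣ n then algebraMap Fq K (f.coeff (n / d)) else 0)
    (bK : Module.Basis (Fin d) Fq K) :
    LinearIndependent (LaurentSeries Fq)
      fun p : Fin d × Fin d => j (ι (bK p.2) * τR ^ (p.1 : ℕ)) := by
  have hd' : (d : ℤ) ≠ 0 := by exact_mod_cast hd.ne'
  rw [Fintype.linearIndependent_iff]
  rintro g hg ⟨i, l0⟩
  have hinn : (0 : ℤ) ≤ (i : ℕ) := by positivity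
  have hilt : ((i : ℕ) : ℤ) < d := by exact_mod_cast i.2
  apply HahnSeries.ext
  funext m
  have hi0 : ((i : ℕ) : ℤ) = ((i : ℕ) + (d : ℤ) * m) % d := by
    rw [Int.add_mul_emod_self_left, Int.emod_eq_of_lt hinn hilt]
  skip
  have hn : cS ((i : ℕ) + (d : ℤ) * m) (∑ p : Fin d × Fin d,
      g p • j (ι (bK p.2) * τR ^ (p.1 : ℕ))) = 0 := by rw [hg]; simp
  rw [hS.coeff_sum_smul hq0 hd hR hι hj halgS bK g _ i hi0] at hn
  have hdiv : ((i : ℕ) + (d : ℤ) * m) / d = m := by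
    rw [Int.add_mul_ediv_left _ _ hd', Int.ediv_eq_zero_of_lt hinn hilt, zero_add]
  rw [hdiv] at hn
  have hn' : ∑ l : Fin d, ((g (i, l)).coeff m : Fq) • bK l = 0 := by
    rw [← hn]
    exact Finset.sum_congr rfl fun l _ => Algebra.smul_def _ _
  have := Fintype.linearIndependent_iff.mp bK.linearIndependent
    (fun l => (g (i, l)).coeff m) hn' l0
  simpa using this

end IsSkewLaurentRing

end Sbasis

set_option maxHeartbeats 2000000 in
set_option synthInstance.maxHeartbeats 1000000 in
/-- The natural algebra homomorphism
`F_{q^d}(τ) ⊗_{F_q(t)} F_q((t)) → F_{q^d}((τ))`, `f ⊗ g ↦ f·g`, is an isomorphism of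
`F_q((t))`-algebras, where `F_{q^d}((τ))` is the skew Laurent series ring with `τλ = λ^q τ`
and `t = τ^d` central; in particular `F_{q^d}((τ))` is a skew field of dimension `d²` over
`F_q((t))`.  Here `F_{q^d}(τ)` is realized as `F_{q^d}{τ} ⊗_{F_q[t]} F_q(t)`. -/
theorem tensor_laurent_iso_skew_laurent
    (Fq K R S : Type) [Field Fq] [Fintype Fq] [Field K] [Fintype K] [Algebra Fq K]
    [Ring R] [Ring S]
    (q d : ℕ) (hq : q = Fintype.card Fq) (hd : 0 < d) (hK : Fintype.card K = q ^ d)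
    (cR : ℕ → R →+ K) (τR : R) (hR : IsSkewPolyRing q K R cR τR)
    (ι : K →+* R) (hι : ∀ (a : K) (n : ℕ), cR n (ι a) = if n = 0 then a else 0)
    [Algebra (Polynomial Fq) R]
    (halg : ∀ p : Polynomial Fq,
      algebraMap (Polynomial Fq) R p =
        p.sum fun n a => ι (algebraMap Fq K a) * τR ^ (d * n))
    (cS : ℤ → S →+ K) (τS : S) (hS : IsSkewLaurentRing q d K S cS τS)
    (j : R →+* S)
    (hj : ∀ (r : R) (n : ℤ), cS n (j r) = if h : 0 ≤ n then cR n.toNat r else 0)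
    [Algebra (LaurentSeries Fq) S]
    (halgS : ∀ (f : LaurentSeries Fq) (n : ℤ),
      cS n (algebraMap (LaurentSeries Fq) S f) =
        if (d : ℤ) ∣ n then algebraMap Fq K (f.coeff (n / d)) else 0)
    (Φ : (LaurentSeries Fq) ⊗[RatFunc Fq] (RatFunc Fq ⊗[Polynomial Fq] R) →+* S)
    (hΦ : ∀ (f : LaurentSeries Fq) (g : RatFunc Fq) (r : R),
      Φ (f ⊗ₜ[RatFunc Fq] (g ⊗ₜ[Polynomial Fq] r)) =
        algebraMap (LaurentSeries Fq) S (f * algebraMap (RatFunc Fq) (LaurentSeries Fq) g) *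
          j r) :
    Function.Bijective Φ ∧ (∀ x : S, x ≠ 0 → IsUnit x) ∧
      Module.finrank (LaurentSeries Fq) S = d ^ 2 := by
  have hq0 : q ≠ 0 := by rw [hq]; exact Fintype.card_ne_zero
  -- a basis of K over Fq
  have hrank : Module.finrank Fq K = d := by
    have hcard : Fintype.card K = Fintype.card Fq ^ Module.finrank Fq K := Module.card_eq_pow_finrank
    rw [hK, hq] at hcard
    exact (Nat.pow_right_injective Fintype.one_lt_card hcard.symm)
  let bK : Module.Basis (Fin d) Fq K := Module.finBasisOfFinrankEq Fq K hrank
  set L := LaurentSeries Fq with hL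
  -- the basis of S
  set B : Fin d × Fin d → S := fun p => j (ι (bK p.2) * τR ^ (p.1 : ℕ)) with hBdef
  have hspanS : ∀ x : S, ∃ g : Fin d × Fin d → L, x = ∑ p, g p • B p :=
    hS.exists_repr hq0 hd hR hι hj halgS bK
  have hindep : LinearIndependent L B := hS.linearIndep hq0 hd hR hι hj halgS bK
  have hspanTop : ⊤ ≤ Submodule.span L (Set.range B) := by
    intro x _
    obtain ⟨g, hx⟩ := hspanS x
    rw [hx]
    exact Submodule.sum_mem _ fun p _ =>
      Submodule.smul_mem _ _ (Submodule.subset_span (Set.mem_range_self p))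
  let bS : Module.Basis (Fin d × Fin d) L S := Module.Basis.mk hindep hspanTop
  have hfinS : FiniteDimensional L S := Module.Finite.of_basis bS
  have hfr : Module.finrank L S = d ^ 2 := by
    rw [Module.finrank_eq_card_basis bS, Fintype.card_prod, Fintype.card_fin, sq]
  -- generators of the tensor product
  set gens : Fin d × Fin d → L ⊗[RatFunc Fq] (RatFunc Fq ⊗[Polynomial Fq] R) :=
    fun p => (1 : L) ⊗ₜ[RatFunc Fq]
      ((1 : RatFunc Fq) ⊗ₜ[Polynomial Fq] (ι (bK p.2) * τR ^ (p.1 : ℕ))) with hgensdef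
  have hΦgen : ∀ (f : L) (p : Fin d × Fin d), Φ (f • gens p) = f • B p := by
    intro f p
    rw [hgensdef]
    rw [TensorProduct.smul_tmul', smul_eq_mul, mul_one, hΦ, map_one, mul_one, hBdef,
      Algebra.smul_def]
  -- surjectivity
  have hsurj : Function.Surjective Φ := by
    intro x
    obtain ⟨g, hx⟩ := hspanS x
    refine ⟨∑ p, g p • gens p, ?_⟩
    rw [map_sum, hx]
    exact Finset.sum_congr rfl fun p _ => hΦgen (g p) p
  -- spanning of the tensor product
  have hRspan : ∀ r : R, r ∈ Submodule.span (Polynomial Fq)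
      (Set.range fun p : Fin d × Fin d => ι (bK p.2) * τR ^ (p.1 : ℕ)) :=
    hR.mem_span hq0 hd hK hι halg bK
  have hTspan : ∀ z : L ⊗[RatFunc Fq] (RatFunc Fq ⊗[Polynomial Fq] R),
      z ∈ Submodule.span L (Set.range gens) := by
    have key : ∀ (r : R) (f : L) (g : RatFunc Fq),
        f ⊗ₜ[RatFunc Fq] (g ⊗ₜ[Polynomial Fq] r) ∈ Submodule.span L (Set.range gens) := by
      intro r
      refine Submodule.span_induction
        (p := fun x _ => ∀ (f : L) (g : RatFunc Fq),
          f ⊗ₜ[RatFunc Fq] (g ⊗ₜ[Polynomial Fq] x) ∈ Submodule.span L (Set.range gens))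
        ?_ ?_ ?_ ?_ (hRspan r)
      · rintro x ⟨p, rfl⟩ f g
        set e : R := ι (bK p.2) * τR ^ (p.1 : ℕ) with he
        set w : RatFunc Fq ⊗[Polynomial Fq] R := (1 : RatFunc Fq) ⊗ₜ[Polynomial Fq] e with hw
        have e1 : g ⊗ₜ[Polynomial Fq] e = g • w := by
          rw [hw, TensorProduct.smul_tmul', smul_eq_mul, mul_one]
        have e2 : f ⊗ₜ[RatFunc Fq] (g • w) = g • (f ⊗ₜ[RatFunc Fq] w) :=
          TensorProduct.tmul_smul g f w
        have e3 : g • (f ⊗ₜ[RatFunc Fq] w) = (g • f) ⊗ₜ[RatFunc Fq] w :=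
          TensorProduct.smul_tmul' g f w
        have e4 : (g • f) ⊗ₜ[RatFunc Fq] w = ((algebraMap (RatFunc Fq) L g * f)) • gens p := by
          rw [Algebra.smul_def g f, hgensdef, TensorProduct.smul_tmul', smul_eq_mul, mul_one]
        rw [e1, e2, e3, e4]
        exact Submodule.smul_mem _ _ (Submodule.subset_span (Set.mem_range_self p))
      · intro f g
        rw [TensorProduct.tmul_zero, TensorProduct.tmul_zero]
        exact zero_mem _
      · intro x y _ _ hx hy f g
        rw [TensorProduct.tmul_add, TensorProduct.tmul_add]
        exact add_mem (hx f g) (hy f g)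
      · intro a x _ hx f g
        have h1 : g ⊗ₜ[Polynomial Fq] (a • x) = (algebraMap (Polynomial Fq) (RatFunc Fq) a * g)
            ⊗ₜ[Polynomial Fq] x := by
          rw [← TensorProduct.smul_tmul, Algebra.smul_def]
        rw [h1]
        exact hx f _
    intro z
    induction z using TensorProduct.induction_on with
    | zero => exact zero_mem _
    | tmul f w =>
      induction w using TensorProduct.induction_on with
      | zero =>
        rw [TensorProduct.tmul_zero]
        exact zero_mem _
      | tmul g r => exact key r f g
      | add w1 w2 h1 h2 =>
        rw [TensorProduct.tmul_add]
        exact add_mem h1 h2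
    | add x y hx hy => exact add_mem hx hy
  -- injectivity
  have hinj : Function.Injective Φ := by
    suffices h : ∀ z, Φ z = 0 → z = 0 by
      intro z1 z2 hz
      have : z1 - z2 = 0 := h _ (by rw [map_sub, hz, sub_self])
      exact sub_eq_zero.mp this
    intro z hz0
    obtain ⟨c, hc⟩ := (Submodule.mem_span_range_iff_exists_fun L).mp (hTspan z)
    have h1 : Φ z = ∑ p, c p • B p := by
      rw [← hc, map_sum]
      exact Finset.sum_congr rfl fun p _ => hΦgen (c p) p
    have h2 : ∀ p, c p = 0 :=
      Fintype.linearIndependent_iff.mp hindep c (by rw [← h1, hz0])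
    rw [← hc]
    exact Finset.sum_eq_zero fun p _ => by rw [h2 p, zero_smul]
  -- skew field
  have hunit : ∀ x : S, x ≠ 0 → IsUnit x := by
    intro x hx
    have hmulinjL : Function.Injective (LinearMap.mulLeft L x) := by
      intro a b hab
      by_contra hne
      have h0 : x * (a - b) = 0 := by
        simp only [mul_sub]
        rw [show x * a = x * b from hab, sub_self]
      exact hS.mul_ne_zero'' hq0 hx (sub_ne_zero.2 hne) h0
    have hmulinjR : Function.Injective (LinearMap.mulRight L x) := by
      intro a b hab
      by_contra hne
      have h0 : (a - b) * x = 0 := by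
        simp only [sub_mul]
        rw [show a * x = b * x from hab, sub_self]
      exact hS.mul_ne_zero'' hq0 (sub_ne_zero.2 hne) hx h0
    obtain ⟨y, hy⟩ := LinearMap.surjective_of_injective hmulinjL 1
    obtain ⟨z, hz⟩ := LinearMap.surjective_of_injective hmulinjR 1
    simp only [LinearMap.mulLeft_apply] at hy
    simp only [LinearMap.mulRight_apply] at hz
    have hzy : z = y := by
      calc z = z * (x * y) := by rw [hy, mul_one]
      _ = (z * x) * y := by rw [mul_assoc]
      _ = y := by rw [hz, one_mul]
    exact ⟨⟨x, y, hy, by rw [← hzy]; exact hz⟩, rfl⟩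
  exact ⟨⟨hinj, hsurj⟩, hunit, hfr⟩
end

section
/- There exist x_1, …, x_{d-1} ∈ F_{q^d}^× with x_d = 1 such that in F_{q^d}{τ} the factorization 1 − t = (1 − τ)(1 − x_{d-1}^{1−q}τ)···(1 − x_1^{1−q}τ) holds, where t = τ^d. -/
open Polynomial Finset

set_option linter.unusedSectionVars false

namespace SkewAux

variable {K : Type} [Field K]

/-- Coefficients of the product `(1 - b_k τ) ⋯ (1 - b_1 τ)` in `K{τ}`. -/
def conv (q : ℕ) (b : ℕ → K) : ℕ → ℕ → K
  | 0, n => if n = 0 then 1 else 0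
  | k+1, n => conv q b k n - b (k+1) * (if n = 0 then 0 else conv q b k (n-1) ^ q)

lemma conv_zero (q : ℕ) (b : ℕ → K) (n : ℕ) : conv q b 0 n = if n = 0 then 1 else 0 := rfl

lemma conv_succ (q : ℕ) (b : ℕ → K) (k n : ℕ) :
    conv q b (k+1) n = conv q b k n - b (k+1) * (if n = 0 then 0 else conv q b k (n-1) ^ q) := rfl

lemma conv_coeff_zero (q : ℕ) (b : ℕ → K) (k : ℕ) : conv q b k 0 = 1 := by
  induction k with
  | zero => simp [conv_zero]
  | succ k ih => simp [conv_succ, ih]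

lemma conv_eq_zero_of_gt (q : ℕ) (hq : q ≠ 0) (b : ℕ → K) (k : ℕ) :
    ∀ n, k < n → conv q b k n = 0 := by
  induction k with
  | zero => intro n hn; rw [conv_zero, if_neg (by omega)]
  | succ k ih =>
    intro n hn
    have hn0 : n ≠ 0 := by omega
    rw [conv_succ, ih n (by omega), ih (n-1) (by omega), if_neg hn0, zero_pow hq]
    ring

/-- The additive polynomial `∑_{n<m} a_n X^{q^n}`. -/
noncomputable def polyOf (q : ℕ) (a : ℕ → K) (m : ℕ) : K[X] :=
  ∑ n ∈ range m, monomial (q^n) (a n)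

lemma coeff_polyOf (q : ℕ) (hq : 2 ≤ q) (a : ℕ → K) (m j : ℕ) :
    (polyOf q a m).coeff (q^j) = if j < m then a j else 0 := by
  have hinj : Function.Injective (q ^ ·) := fun i j hij => Nat.pow_right_injective hq hij
  rw [polyOf, finset_sum_coeff]
  by_cases hj : j < m
  · rw [if_pos hj, Finset.sum_eq_single j]
    · simp [coeff_monomial]
    · intro n _ hne
      rw [coeff_monomial, if_neg (fun hc => hne (hinj hc))]
    · exact fun hc => absurd (Finset.mem_range.mpr hj) hc
  · rw [if_neg hj]
    refine Finset.sum_eq_zero fun n hn => ?_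
    rw [coeff_monomial, if_neg]
    intro hc
    exact hj (hinj hc ▸ Finset.mem_range.mp hn)

lemma natDegree_polyOf_le (q : ℕ) (hq : 1 ≤ q) (a : ℕ → K) (m : ℕ) :
    (polyOf q a m).natDegree ≤ q ^ (m - 1) := by
  refine (Polynomial.natDegree_sum_le _ _).trans ?_
  rw [Finset.fold_max_le]
  constructor
  · positivity
  · intro n hn
    have hn' := Finset.mem_range.mp hn
    refine (Polynomial.natDegree_monomial_le _).trans ?_
    exact Nat.pow_le_pow_right hq (by omega : n ≤ m - 1)

lemma eval_polyOf (q : ℕ) (a : ℕ → K) (m : ℕ) (z : K) :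
    (polyOf q a m).eval z = ∑ n ∈ range m, a n * z ^ (q^n) := by
  simp [polyOf, eval_finset_sum]

section FqK
variable {Fq K : Type} [Field Fq] [Fintype Fq] [Field K] [Fintype K] [Algebra Fq K]
variable {q : ℕ}

lemma two_le_q (hq : q = Fintype.card Fq) : 2 ≤ q := hq ▸ Fintype.one_lt_card

/-- The `q`-power Frobenius of `K` as a ring hom. -/
lemma exists_frobq (hq : q = Fintype.card Fq) : ∃ F : K →+* K, ∀ x, F x = x ^ q := by
  obtain ⟨p, hp⟩ : ∃ p, CharP Fq p := CharP.exists Fq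
  have hpF : Fact p.Prime := ⟨(CharP.char_is_prime Fq p)⟩
  have hKp : CharP K p := charP_of_injective_algebraMap (algebraMap Fq K).injective p
  obtain ⟨e, -, hcard⟩ := FiniteField.card Fq p
  have hqe : q = p ^ (e : ℕ) := hq.trans hcard
  refine ⟨⟨⟨⟨fun x => x ^ q, one_pow q⟩, fun x y => mul_pow x y q⟩, ?_, ?_⟩, fun x => rfl⟩
  · exact zero_pow (by have := two_le_q hq; omega)
  · intro x y
    simpa [hqe] using add_pow_char_pow (R := K) p (e : ℕ) (x := x) (y := y)

lemma algebraMap_pow_q (hq : q = Fintype.card Fq) (cf : Fq) :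
    (algebraMap Fq K cf) ^ q = algebraMap Fq K cf := by
  rw [← map_pow, hq, FiniteField.pow_card]

/-- Fixed points of the `q`-power map are in the image of `Fq`. -/
lemma exists_of_pow_q_eq (hq : q = Fintype.card Fq) (a : K) (ha : a ^ q = a) :
    ∃ cf : Fq, algebraMap Fq K cf = a := by
  classical
  by_contra hno
  push_neg at hno
  have hq2 : 2 ≤ q := two_le_q hq
  set P : K[X] := X ^ q - X with hP
  have hPne : P ≠ 0 := by
    intro h0
    have : P.coeff 1 = 0 := by rw [h0]; simp
    rw [hP] at this
    rw [coeff_sub, coeff_X_pow, coeff_X_one, if_neg (by omega : ¬ (1 : ℕ) = q)] at this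
    simp at this
  have hdeg : P.natDegree ≤ q := by
    refine (natDegree_sub_le _ _).trans ?_
    simp [natDegree_X_pow]
    omega
  set S : Finset K := insert a ((Finset.univ : Finset Fq).image (algebraMap Fq K)) with hS
  have hcard : S.card = q + 1 := by
    rw [hS, Finset.card_insert_of_notMem, Finset.card_image_of_injective _
      (algebraMap Fq K).injective, Finset.card_univ, hq]
    intro hmem
    obtain ⟨cf, -, hcf⟩ := Finset.mem_image.mp hmem
    exact hno cf hcf
  have heval : ∀ z ∈ S, P.eval z = 0 := by
    intro z hz
    rcases Finset.mem_insert.mp hz with rfl | hz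
    · simp [hP, ha]
    · obtain ⟨cf, -, rfl⟩ := Finset.mem_image.mp hz
      simp [hP, algebraMap_pow_q hq]
  exact hPne (Polynomial.eq_zero_of_natDegree_lt_card_of_eval_eq_zero' P S heval (by omega))

end FqK

section FqK2
variable {Fq K : Type} [Field Fq] [Fintype Fq] [Field K] [Fintype K] [Algebra Fq K]
variable {q : ℕ}

lemma pow_q_pow_add (hq : q = Fintype.card Fq) (v w : K) (n : ℕ) :
    (v + w) ^ q ^ n = v ^ q ^ n + w ^ q ^ n := by
  obtain ⟨F, hF⟩ := exists_frobq (Fq := Fq) (K := K) hq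
  induction n with
  | zero => simp
  | succ n ih => rw [pow_succ, pow_mul, pow_mul, pow_mul, ih, ← hF, ← hF, ← hF, ← map_add]

lemma algebraMap_pow_q_pow (hq : q = Fintype.card Fq) (cf : Fq) (n : ℕ) :
    (algebraMap Fq K cf) ^ q ^ n = algebraMap Fq K cf := by
  induction n with
  | zero => simp
  | succ n ih => rw [pow_succ, pow_mul, ih, algebraMap_pow_q hq]

lemma smul_pow_q_pow (hq : q = Fintype.card Fq) (cf : Fq) (w : K) (n : ℕ) :
    (cf • w) ^ q ^ n = cf • (w ^ q ^ n) := by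
  rw [Algebra.smul_def, Algebra.smul_def, mul_pow, algebraMap_pow_q_pow hq]

lemma sum_pow_q (hq : q = Fintype.card Fq) {ι : Type*} (s : Finset ι) (f : ι → K) :
    (∑ i ∈ s, f i) ^ q = ∑ i ∈ s, (f i) ^ q := by
  obtain ⟨F, hF⟩ := exists_frobq (Fq := Fq) (K := K) hq
  rw [← hF, map_sum]
  simp [hF]

/-- The `Fq`-linear map `z ↦ ∑_{n<m} a n * z^{q^n}`. -/
noncomputable def addP (hq : q = Fintype.card Fq) (a : ℕ → K) (m : ℕ) : K →ₗ[Fq] K where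
  toFun z := ∑ n ∈ Finset.range m, a n * z ^ q ^ n
  map_add' v w := by
    rw [← Finset.sum_add_distrib]
    exact Finset.sum_congr rfl fun n _ => by rw [pow_q_pow_add hq, mul_add]
  map_smul' cf w := by
    rw [RingHom.id_apply, Finset.smul_sum]
    show ∑ n ∈ Finset.range m, a n * (cf • w) ^ q ^ n = _
    exact Finset.sum_congr rfl fun n _ => by
      rw [smul_pow_q_pow hq, mul_smul_comm]

lemma addP_apply (hq : q = Fintype.card Fq) (a : ℕ → K) (m : ℕ) (z : K) :
    addP hq a m z = ∑ n ∈ Finset.range m, a n * z ^ q ^ n := rfl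

/-- If two `q`-additive polynomials of `q`-degree `≤ m` agree at `X` (coefficient `0`)
and vanish-difference on a set of `q^m` elements, they have equal coefficients. -/
lemma coeff_eq_of_vanish (hq : q = Fintype.card Fq) {m : ℕ} (a a' : ℕ → K)
    (ha0 : a 0 = a' 0) (S : Finset K) (hcard : q ^ m ≤ S.card)
    (heval : ∀ z ∈ S, ∑ n ∈ Finset.range (m+1), a n * z ^ q ^ n
      = ∑ n ∈ Finset.range (m+1), a' n * z ^ q ^ n) :
    ∀ n, n < m + 1 → a n = a' n := by
  classical
  have hq2 : 2 ≤ q := two_le_q hq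
  rcases Nat.eq_zero_or_pos m with rfl | hm
  · intro n hn
    interval_cases n
    exact ha0
  -- the difference polynomial, with the `n = 0` term dropped
  set Dh : K[X] := polyOf q (fun n => a (n+1) - a' (n+1)) m with hDh
  have hDh0 : Dh = 0 := by
    have hdeg : Dh.natDegree ≤ q ^ (m - 1) := natDegree_polyOf_le q (by omega) _ m
    set S' : Finset K := S.image (· ^ q) with hS'
    have hinj : Function.Injective (fun z : K => z ^ q) := by
      obtain ⟨F, hF⟩ := exists_frobq (Fq := Fq) (K := K) hq
      have : (fun z : K => z ^ q) = F := by funext z; rw [hF]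
      rw [this]
      exact F.injective
    have hcard' : S'.card = S.card := Finset.card_image_of_injective _ hinj
    refine Polynomial.eq_zero_of_natDegree_lt_card_of_eval_eq_zero' Dh S' ?_ ?_
    · intro y hy
      obtain ⟨z, hz, rfl⟩ := Finset.mem_image.mp hy
      have h1 : ∑ n ∈ Finset.range (m+1), (a n - a' n) * z ^ q ^ n = 0 := by
        have := heval z hz
        rw [← sub_eq_zero] at this
        rw [← this, ← Finset.sum_sub_distrib]
        exact Finset.sum_congr rfl fun n _ => by ring
      rw [eval_polyOf]
      calc ∑ n ∈ Finset.range m, (a (n+1) - a' (n+1)) * (z ^ q) ^ q ^ n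
          = ∑ n ∈ Finset.range m, (a (n+1) - a' (n+1)) * z ^ q ^ (n+1) := by
            refine Finset.sum_congr rfl fun n _ => by
              rw [← pow_mul, ← pow_succ']
        _ = ∑ n ∈ Finset.range (m+1), (a n - a' n) * z ^ q ^ n := by
            rw [Finset.sum_range_succ' (fun n => (a n - a' n) * z ^ q ^ n) m]
            simp [ha0]
        _ = 0 := h1
    · calc Dh.natDegree ≤ q ^ (m-1) := hdeg
        _ < q ^ m := Nat.pow_lt_pow_right (by omega) (by omega)
        _ ≤ S.card := hcard
        _ = S'.card := hcard'.symm
  intro n hn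
  rcases Nat.eq_zero_or_pos n with rfl | hn0
  · exact ha0
  · obtain ⟨j, rfl⟩ : ∃ j, n = j + 1 := ⟨n - 1, by omega⟩
    have := coeff_polyOf q hq2 (fun n => a (n+1) - a' (n+1)) m j
    rw [← hDh, hDh0] at this
    simp only [coeff_zero] at this
    have hj : j < m := by omega
    rw [if_pos hj] at this
    exact sub_eq_zero.mp this.symm

end FqK2

section RingSide
variable {K R : Type} [Field K] [Ring R] {q : ℕ} {c : ℕ → R →+ K} {τ : R}

lemma coeff_iota_mul (h : IsSkewPolyRing q K R c τ) (ι : K →+* R)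
    (hι : ∀ (a : K) (n : ℕ), c n (ι a) = if n = 0 then a else 0)
    (a : K) (y : R) (n : ℕ) : c n (ι a * y) = a * c n y := by
  rw [h.coeff_mul]
  rw [Finset.sum_eq_single 0]
  · simp [hι]
  · intro i _ hi
    simp [hι, hi]
  · simp

lemma coeff_fac (h : IsSkewPolyRing q K R c τ) (ι : K →+* R)
    (hι : ∀ (a : K) (n : ℕ), c n (ι a) = if n = 0 then a else 0)
    (a : K) (n : ℕ) :
    c n (1 - ι a * τ) = (if n = 0 then 1 else 0) - (if n = 1 then a else 0) := by
  rw [map_sub, h.coeff_one, coeff_iota_mul h ι hι, h.coeff_tau]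
  split_ifs <;> ring

lemma coeff_fac_mul (h : IsSkewPolyRing q K R c τ) (hq : q ≠ 0) (ι : K →+* R)
    (hι : ∀ (a : K) (n : ℕ), c n (ι a) = if n = 0 then a else 0)
    (a : K) (y : R) (n : ℕ) :
    c n ((1 - ι a * τ) * y) = c n y - a * (if n = 0 then 0 else c (n-1) y ^ q) := by
  rw [h.coeff_mul]
  rcases Nat.eq_zero_or_pos n with rfl | hn
  · rw [Finset.sum_range_one, coeff_fac h ι hι]
    simp
  · have hsub : ({0, 1} : Finset ℕ) ⊆ Finset.range (n+1) := by
      intro i hi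
      fin_cases hi <;> simp <;> omega
    rw [← Finset.sum_subset hsub]
    · rw [Finset.sum_pair (by omega : (0:ℕ) ≠ 1), coeff_fac h ι hι, coeff_fac h ι hι]
      rw [if_neg (by omega : ¬ n = 0)]
      simp only [if_pos rfl, if_neg (by omega : ¬ (0:ℕ) = 1), if_neg (by omega : ¬ (1:ℕ) = 0),
        Nat.sub_zero, pow_zero, pow_one, if_true, ite_true]
      ring
    · intro i hi hi2
      rw [coeff_fac h ι hι, if_neg, if_neg]
      · ring
      · simp at hi2; omega
      · simp at hi2; omega

lemma coeff_tau_pow (h : IsSkewPolyRing q K R c τ) (hq : q ≠ 0) (k n : ℕ) :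
    c n (τ ^ k) = if n = k then 1 else 0 := by
  induction k generalizing n with
  | zero => rw [pow_zero, h.coeff_one]
  | succ k ih =>
    rw [pow_succ, h.coeff_mul]
    have : ∀ i ∈ Finset.range (n+1),
        c i (τ ^ k) * c (n - i) τ ^ q ^ i
          = if i = k then (if n - i = 1 then 1 else 0 : K) else 0 := by
      intro i _
      rw [ih, h.coeff_tau]
      split_ifs with h1 h2 h2 <;> simp [zero_pow (pow_ne_zero _ hq)]
    rw [Finset.sum_congr rfl this, Finset.sum_ite_eq' (Finset.range (n+1)) k]
    split_ifs with h1 h2 h3 <;> simp_all <;> omega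

lemma coeff_list_prod (h : IsSkewPolyRing q K R c τ) (hq : q ≠ 0) (ι : K →+* R)
    (hι : ∀ (a : K) (n : ℕ), c n (ι a) = if n = 0 then a else 0) (x : ℕ → K) :
    ∀ k n, c n ((List.ofFn fun j : Fin k =>
        (1 - ι (x (k - (j:ℕ)) ^ ((1:ℤ) - (q:ℤ))) * τ)).prod)
      = conv q (fun i => x i ^ ((1:ℤ) - (q:ℤ))) k n := by
  intro k
  induction k with
  | zero =>
    intro n
    simp only [List.ofFn_zero, List.prod_nil, conv_zero]
    exact h.coeff_one n
  | succ k ih =>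
    intro n
    rw [List.ofFn_succ, List.prod_cons]
    have htail : (fun j : Fin k =>
        (1 - ι (x (k + 1 - (j.succ : ℕ)) ^ ((1:ℤ) - (q:ℤ))) * τ))
        = fun j : Fin k => (1 - ι (x (k - (j:ℕ)) ^ ((1:ℤ) - (q:ℤ))) * τ) := by
      funext j
      have hval : k + 1 - ((j.succ : Fin (k+1)) : ℕ) = k - (j : ℕ) := by
        simp [Fin.val_succ]
      rw [hval]
    simp only [Fin.val_zero, Nat.sub_zero]
    rw [htail, coeff_fac_mul h hq ι hι, ih n, conv_succ]
    rcases Nat.eq_zero_or_pos n with rfl | hn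
    · simp
    · rw [if_neg (by omega : ¬ n = 0), if_neg (by omega : ¬ n = 0), ih (n-1)]

end RingSide

section Construction
variable {K : Type} [Field K]

/-- Coefficients of the partial products, constructed recursively: at each step we
multiply on the left by `1 - x_{k+1}^{1-q} τ` where `x_{k+1}` is the value of the previous
partial product (as additive polynomial) at the new basis vector `e k`. -/
def gcoef (q : ℕ) (e : ℕ → K) : ℕ → ℕ → K
  | 0 => fun n => if n = 0 then 1 else 0
  | k+1 => fun n => gcoef q e k n -
      (∑ m ∈ Finset.range (k+1), gcoef q e k m * e k ^ q ^ m) ^ ((1:ℤ) - (q:ℤ)) *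
      (if n = 0 then 0 else gcoef q e k (n-1) ^ q)

/-- The next kernel element. -/
def xval (q : ℕ) (e : ℕ → K) (k : ℕ) : K :=
  ∑ m ∈ Finset.range (k+1), gcoef q e k m * e k ^ q ^ m

lemma gcoef_zero' (q : ℕ) (e : ℕ → K) (n : ℕ) : gcoef q e 0 n = if n = 0 then 1 else 0 := rfl

lemma gcoef_succ (q : ℕ) (e : ℕ → K) (k n : ℕ) :
    gcoef q e (k+1) n = gcoef q e k n -
      (xval q e k) ^ ((1:ℤ) - (q:ℤ)) * (if n = 0 then 0 else gcoef q e k (n-1) ^ q) := rfl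

end Construction

end SkewAux

/-- There exist `x_1, …, x_{d-1} ∈ F_{q^d}^×` (and `x_d = 1`) such that in the
skew polynomial ring `F_{q^d}{τ}` (with `t = τ^d` central) one has the factorization
`1 − t = (1 − τ)(1 − x_{d-1}^{1−q} τ) ⋯ (1 − x_1^{1−q} τ)`.
Here `ι : F_{q^d} →+* R` is the constant embedding, characterized on coefficients. -/
theorem factorization_one_sub_t
    (Fq K R : Type) [Field Fq] [Fintype Fq] [Field K] [Fintype K] [Algebra Fq K] [Ring R]
    (q d : ℕ) (hq : q = Fintype.card Fq) (hd : 0 < d) (hK : Fintype.card K = q ^ d)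
    (c : ℕ → R →+ K) (τ : R) (h : IsSkewPolyRing q K R c τ)
    (ι : K →+* R) (hι : ∀ (a : K) (n : ℕ), c n (ι a) = if n = 0 then a else 0) :
    ∃ x : ℕ → K, x d = 1 ∧ (∀ i, 1 ≤ i → i < d → x i ≠ 0) ∧
      1 - τ ^ d =
        (List.ofFn fun j : Fin d =>
          1 - ι (x (d - (j : ℕ)) ^ ((1 : ℤ) - (q : ℤ))) * τ).prod := by
  classical
  open SkewAux Finset Polynomial in
  have hq2 : 2 ≤ q := SkewAux.two_le_q (Fq := Fq) hq
  have hq0 : q ≠ 0 := by omega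
  -- finrank of K over Fq is d
  have hfr : Module.finrank Fq K = d := by
    have hcard := Module.card_eq_pow_finrank (K := Fq) (V := K)
    rw [hK, ← hq] at hcard
    exact (Nat.pow_right_injective hq2 hcard).symm
  -- the trace map
  set Tr : K →ₗ[Fq] K := SkewAux.addP hq (fun _ => 1) d with hTrdef
  have hTrapp : ∀ z, Tr z = ∑ n ∈ Finset.range d, z ^ q ^ n := by
    intro z
    rw [hTrdef, SkewAux.addP_apply]
    simp
  have hzqd : ∀ z : K, z ^ q ^ d = z := by
    intro z
    rw [← hK]
    exact FiniteField.pow_card z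
  have hTr_fix : ∀ z, (Tr z) ^ q = Tr z := by
    intro z
    rw [hTrapp, SkewAux.sum_pow_q (Fq := Fq) hq]
    calc ∑ n ∈ Finset.range d, (z ^ q ^ n) ^ q
        = ∑ n ∈ Finset.range d, z ^ q ^ (n+1) := by
          refine Finset.sum_congr rfl fun n _ => ?_
          rw [← pow_mul, ← pow_succ]
      _ = ∑ n ∈ Finset.range d, z ^ q ^ n := by
          have h2 := Finset.sum_range_succ' (fun n => z ^ q ^ n) d
          have h3 := Finset.sum_range_succ (fun n => z ^ q ^ n) d
          rw [hzqd z] at h3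
          rw [h3] at h2
          have h0 : z ^ q ^ 0 = z := by rw [pow_zero, pow_one]
          rw [h0] at h2
          exact (add_right_cancel h2).symm
  have hTr_im : ∀ z, ∃ cf : Fq, algebraMap Fq K cf = Tr z :=
    fun z => SkewAux.exists_of_pow_q_eq hq _ (hTr_fix z)
  have hTr_ne : ∃ z0, Tr z0 ≠ 0 := by
    by_contra hall
    push_neg at hall
    have hP : SkewAux.polyOf q (fun _ => (1:K)) d = 0 := by
      refine Polynomial.eq_zero_of_natDegree_lt_card_of_eval_eq_zero' _ Finset.univ ?_ ?_
      · intro z _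
        rw [SkewAux.eval_polyOf]
        have := hall z
        rw [hTrapp] at this
        simpa using this
      · calc (SkewAux.polyOf q (fun _ => (1:K)) d).natDegree
            ≤ q ^ (d-1) := SkewAux.natDegree_polyOf_le q (by omega) _ d
          _ < q ^ d := Nat.pow_lt_pow_right (by omega) (by omega)
          _ = Fintype.card K := hK.symm
          _ = Finset.univ.card := (Finset.card_univ).symm
    have h1 := SkewAux.coeff_polyOf q hq2 (fun _ => (1:K)) d 0
    rw [hP] at h1
    simp only [Polynomial.coeff_zero] at h1
    rw [if_pos hd] at h1
    exact one_ne_zero h1.symm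
  set N := LinearMap.ker Tr with hNdef
  have hrank_range : Module.finrank Fq (LinearMap.range Tr) = 1 := by
    have hle : Module.finrank Fq (LinearMap.range Tr) ≤ 1 := by
      have hsub : LinearMap.range Tr ≤ Submodule.span Fq {(1:K)} := by
        rintro w ⟨z, rfl⟩
        obtain ⟨cf, hcf⟩ := hTr_im z
        rw [← hcf, show algebraMap Fq K cf = cf • (1:K) by rw [Algebra.smul_def, mul_one]]
        exact Submodule.smul_mem _ _ (Submodule.mem_span_singleton_self 1)
      refine (Submodule.finrank_mono hsub).trans ?_
      rw [finrank_span_singleton (one_ne_zero : (1:K) ≠ 0)]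
    have hpos : Module.finrank Fq (LinearMap.range Tr) ≠ 0 := by
      intro h0
      obtain ⟨z0, hz0⟩ := hTr_ne
      have : LinearMap.range Tr = ⊥ := Submodule.finrank_eq_zero.mp h0
      exact hz0 (by
        have : Tr z0 ∈ (⊥ : Submodule Fq K) := this ▸ LinearMap.mem_range_self Tr z0
        simpa using this)
    omega
  have hNrank : Module.finrank Fq N = d - 1 := by
    have hrn := LinearMap.finrank_range_add_finrank_ker Tr
    rw [hfr, hrank_range, ← hNdef] at hrn
    omega
  have hNcard : (Finset.univ.filter (· ∈ N)).card = q ^ (d-1) := by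
    rw [← Fintype.card_subtype]
    rw [show Fintype.card {z : K // z ∈ N} = Fintype.card N from rfl]
    rw [Module.card_eq_pow_finrank (K := Fq) (V := N), hNrank, ← hq]
  -- basis of N
  set bN := Module.finBasisOfFinrankEq Fq N hNrank with hbNdef
  set e : ℕ → K := fun n => if hn : n < d - 1 then (bN ⟨n, hn⟩ : K) else 0 with hedef
  have heval_lt : ∀ (i : Fin (d-1)), e (i : ℕ) = (bN i : K) := by
    intro i
    rw [hedef]
    simp [i.2]
  have heN : ∀ n, n < d-1 → e n ∈ N := by
    intro n hn
    rw [heval_lt ⟨n, hn⟩]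
    exact (bN ⟨n, hn⟩).2
  have hind : LinearIndependent Fq (fun i : Fin (d-1) => (bN i : K)) :=
    bN.linearIndependent.map' N.subtype (Submodule.ker_subtype N)
  set V : ℕ → Submodule Fq K := fun k => Submodule.span Fq (e '' Set.Iio k) with hVdef
  have himg : ∀ k, k ≤ d-1 →
      (fun i : Fin (d-1) => (bN i : K)) '' {i : Fin (d-1) | (i:ℕ) < k} = e '' Set.Iio k := by
    intro k hk
    ext z
    simp only [Set.mem_image, Set.mem_setOf_eq, Set.mem_Iio]
    constructor
    · rintro ⟨i, hik, rfl⟩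
      exact ⟨i, hik, heval_lt i⟩
    · rintro ⟨n, hn, rfl⟩
      exact ⟨⟨n, lt_of_lt_of_le hn hk⟩, hn, (heval_lt ⟨n, lt_of_lt_of_le hn hk⟩).symm⟩
  have hVrank : ∀ k, k ≤ d-1 → Module.finrank Fq (V k) = k := by
    intro k hk
    have hfam : LinearIndependent Fq (fun i : Fin k => e (i : ℕ)) := by
      have h1 : (fun i : Fin k => e (i:ℕ))
          = (fun i : Fin (d-1) => (bN i : K)) ∘ (Fin.castLE hk) := by
        funext i
        exact heval_lt (Fin.castLE hk i)
      rw [h1]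
      exact hind.comp _ (Fin.castLE_injective hk)
    have hrange : Set.range (fun i : Fin k => e (i:ℕ)) = e '' Set.Iio k := by
      ext z
      constructor
      · rintro ⟨i, rfl⟩
        exact ⟨i, i.2, rfl⟩
      · rintro ⟨n, hn, rfl⟩
        exact ⟨⟨n, hn⟩, rfl⟩
    rw [hVdef]
    simp only
    show Module.finrank Fq (Submodule.span Fq (e '' Set.Iio k)) = k
    rw [← hrange, finrank_span_eq_card hfam, Fintype.card_fin]
  have hVcard : ∀ k, k ≤ d-1 → (Finset.univ.filter (· ∈ V k)).card = q ^ k := by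
    intro k hk
    rw [← Fintype.card_subtype]
    rw [show Fintype.card {z : K // z ∈ V k} = Fintype.card (V k) from rfl]
    rw [Module.card_eq_pow_finrank (K := Fq) (V := V k), hVrank k hk, ← hq]
  have hek_not : ∀ k, k < d - 1 → e k ∉ V k := by
    intro k hk
    have h2 := hind.notMem_span_image (s := {i : Fin (d-1) | (i:ℕ) < k})
      (x := ⟨k, hk⟩) (by simp)
    rw [himg k (le_of_lt hk)] at h2
    rw [hVdef]
    simpa [heval_lt ⟨k, hk⟩] using h2
  -- the construction
  set xv : ℕ → K := SkewAux.xval q e with hxvdef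
  have hxvapp : ∀ k, xv k = ∑ m ∈ Finset.range (k+1), SkewAux.gcoef q e k m * e k ^ q ^ m :=
    fun k => rfl
  set xx : ℕ → K := fun i => if 1 ≤ i ∧ i < d then xv (i-1) else 1 with hxxdef
  set bf : ℕ → K := fun i => xx i ^ ((1:ℤ) - (q:ℤ)) with hbfdef
  have hgc : ∀ k, k ≤ d-1 → SkewAux.conv q bf k = SkewAux.gcoef q e k := by
    intro k
    induction k with
    | zero => intro _; funext n; rfl
    | succ k ih =>
      intro hk
      funext n
      rw [SkewAux.conv_succ, SkewAux.gcoef_succ, ih (by omega)]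
      have hxk : bf (k+1) = xv k ^ ((1:ℤ) - (q:ℤ)) := by
        rw [hbfdef]
        simp only
        rw [hxxdef]
        simp only
        rw [if_pos ⟨by omega, by omega⟩]
        norm_num
      rw [hxk, hxvdef]
  have hg0 : ∀ k, k ≤ d - 1 → SkewAux.gcoef q e k 0 = 1 := by
    intro k hk
    rw [← hgc k hk, SkewAux.conv_coeff_zero]
  have hggt : ∀ k, k ≤ d - 1 → ∀ n, k < n → SkewAux.gcoef q e k n = 0 := by
    intro k hk n hn
    rw [← hgc k hk]
    exact SkewAux.conv_eq_zero_of_gt q hq0 bf k n hn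
  -- the nonvanishing of the new kernel elements, by counting roots
  have step_ne : ∀ k, k < d - 1 →
      (∀ z ∈ V k, ∑ n ∈ Finset.range (k+1), SkewAux.gcoef q e k n * z ^ q ^ n = 0) →
      xv k ≠ 0 := by
    intro k hk hvan h0
    set P := SkewAux.polyOf q (SkewAux.gcoef q e k) (k+1) with hPdef
    have hP0 : P ≠ 0 := by
      intro hc
      have h1 := SkewAux.coeff_polyOf q hq2 (SkewAux.gcoef q e k) (k+1) 0
      rw [← hPdef, hc] at h1
      simp only [Polynomial.coeff_zero] at h1
      rw [if_pos (by omega)] at h1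
      rw [hg0 k (by omega)] at h1
      exact one_ne_zero h1.symm
    set S := insert (e k) (Finset.univ.filter (· ∈ V k)) with hSdef
    have hcardS : q ^ k < S.card := by
      rw [hSdef, Finset.card_insert_of_notMem, hVcard k (by omega)]
      · omega
      · intro hmem
        exact hek_not k hk (Finset.mem_filter.mp hmem).2
    have heval : ∀ z' ∈ S, P.eval z' = 0 := by
      intro z' hz'
      rw [hPdef, SkewAux.eval_polyOf]
      rcases Finset.mem_insert.mp hz' with rfl | hz'
      · rw [← hxvapp k] at *
        exact h0
      · exact hvan z' (Finset.mem_filter.mp hz').2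
    refine hP0 (Polynomial.eq_zero_of_natDegree_lt_card_of_eval_eq_zero' P S heval ?_)
    calc P.natDegree ≤ q ^ k := by
          have := SkewAux.natDegree_polyOf_le q (by omega) (SkewAux.gcoef q e k) (k+1)
          simpa using this
      _ < S.card := hcardS
  -- main induction
  have key : ∀ k, k ≤ d - 1 →
      ∀ z ∈ V k, ∑ n ∈ Finset.range (k+1), SkewAux.gcoef q e k n * z ^ q ^ n = 0 := by
    intro k
    induction k with
    | zero =>
      intro _ z hz
      have hz0 : z = 0 := by
        rw [hVdef] at hz
        simp only at hz
        rw [show Set.Iio (0:ℕ) = ∅ from by ext; simp, Set.image_empty,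
          Submodule.span_empty, Submodule.mem_bot] at hz
        exact hz
      subst hz0
      refine Finset.sum_eq_zero fun n _ => ?_
      rw [zero_pow (pow_ne_zero n hq0), mul_zero]
    | succ k ih =>
      intro hk1 z hz
      have hk : k ≤ d - 1 := by omega
      have hkd : k < d - 1 := by omega
      have hprev := ih hk
      have hxvne : xv k ≠ 0 := step_ne k hkd hprev
      -- decompose z
      have hins : e '' Set.Iio ((k:ℕ)+1) = insert (e k) (e '' Set.Iio k) := by
        rw [show Set.Iio ((k:ℕ)+1) = insert k (Set.Iio k) from by ext; simp,
          Set.image_insert_eq]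
      have hz' : z ∈ Submodule.span Fq (insert (e k) (e '' Set.Iio k)) := by
        rw [hVdef] at hz
        simp only at hz
        rwa [hins] at hz
      obtain ⟨cf, v, hv, rfl⟩ := Submodule.mem_span_insert.mp hz'
      have hvV : v ∈ V k := by rw [hVdef]; exact hv
      -- the linear map given by the partial product
      set LK : K →ₗ[Fq] K := SkewAux.addP hq (SkewAux.gcoef q e k) (k+1) with hLKdef
      have hLKapp : ∀ w, LK w = ∑ n ∈ Finset.range (k+1), SkewAux.gcoef q e k n * w ^ q ^ n :=
        fun w => rfl
      have hLKz : LK (cf • e k + v) = (algebraMap Fq K cf) * xv k := by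
        rw [map_add, map_smul, hLKapp v, hprev v hvV, add_zero, Algebra.smul_def, hLKapp (e k),
          ← hxvapp k]
      -- the evaluation of the next partial product
      have hstep : ∀ w : K,
          ∑ n ∈ Finset.range (k+1+1), SkewAux.gcoef q e (k+1) n * w ^ q ^ n
            = (∑ n ∈ Finset.range (k+1), SkewAux.gcoef q e k n * w ^ q ^ n)
              - xv k ^ ((1:ℤ) - (q:ℤ))
                * (∑ n ∈ Finset.range (k+1), SkewAux.gcoef q e k n * w ^ q ^ n) ^ q := by
        intro w
        have hsplit : ∀ n, SkewAux.gcoef q e (k+1) n * w ^ q ^ n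
            = SkewAux.gcoef q e k n * w ^ q ^ n
              - xv k ^ ((1:ℤ) - (q:ℤ))
                * ((if n = 0 then 0 else SkewAux.gcoef q e k (n-1) ^ q) * w ^ q ^ n) := by
          intro n
          rw [SkewAux.gcoef_succ]
          have : SkewAux.xval q e k = xv k := rfl
          rw [this]
          ring
        rw [Finset.sum_congr rfl (fun n _ => hsplit n), Finset.sum_sub_distrib,
          ← Finset.mul_sum]
        congr 1
        · rw [Finset.sum_range_succ, hggt k hk (k+1) (by omega), zero_mul, add_zero]
        · congr 1
          rw [Finset.sum_range_succ'
            (fun n => (if n = 0 then (0:K) else SkewAux.gcoef q e k (n-1) ^ q) * w ^ q ^ n)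
            (k+1)]
          simp only [Nat.succ_ne_zero, if_neg, Nat.add_sub_cancel, if_pos rfl, zero_mul,
            add_zero, reduceIte]
          rw [SkewAux.sum_pow_q (Fq := Fq) hq]
          refine Finset.sum_congr rfl fun i _ => ?_
          rw [mul_pow, ← pow_mul, ← pow_succ]
      have hA : ∑ n ∈ Finset.range (k+1), SkewAux.gcoef q e k n * (cf • e k + v) ^ q ^ n
          = algebraMap Fq K cf * xv k := by
        rw [← hLKapp, hLKz]
      rw [hstep (cf • e k + v), hA, mul_pow, SkewAux.algebraMap_pow_q hq]
      have hzp : xv k ^ ((1:ℤ) - (q:ℤ)) * xv k ^ (q:ℕ) = xv k := by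
        rw [← zpow_natCast (xv k) q, ← zpow_add₀ hxvne]
        norm_num
      linear_combination (-(algebraMap Fq K cf)) * hzp
  -- identify the level `d-1` coefficients with the trace coefficients
  have hVN : V (d-1) = N := by
    refine Submodule.eq_of_le_of_finrank_eq ?_ ?_
    · rw [hVdef]
      simp only
      rw [Submodule.span_le]
      rintro w ⟨n, hn, rfl⟩
      exact heN n hn
    · rw [hVrank (d-1) le_rfl, hNrank]
  have htr : ∀ n, n < d → SkewAux.gcoef q e (d-1) n = 1 := by
    have hm := SkewAux.coeff_eq_of_vanish (Fq := Fq) hq (m := d-1)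
      (SkewAux.gcoef q e (d-1)) (fun _ => 1) (hg0 (d-1) le_rfl)
      (Finset.univ.filter (· ∈ N)) (le_of_eq hNcard.symm) ?_
    · intro n hn
      exact hm n (by omega)
    · intro z hz
      have hzN : z ∈ N := (Finset.mem_filter.mp hz).2
      have h1 : ∑ n ∈ Finset.range ((d-1)+1), SkewAux.gcoef q e (d-1) n * z ^ q ^ n = 0 :=
        key (d-1) le_rfl z (hVN ▸ hzN)
      have h2 : ∑ n ∈ Finset.range ((d-1)+1), (1:K) * z ^ q ^ n = 0 := by
        have h3 : Tr z = 0 := LinearMap.mem_ker.mp hzN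
        rw [hTrapp] at h3
        rw [show (d-1)+1 = d from by omega]
        simpa using h3
      rw [h1, h2]
  -- the final coefficients
  have hconv : ∀ n, SkewAux.conv q bf d n
      = (if n = 0 then (1:K) else 0) - (if n = d then 1 else 0) := by
    intro n
    have hdd : d = (d-1)+1 := by omega
    have hbfd : bf ((d-1)+1) = 1 := by
      rw [hbfdef]
      simp only
      rw [hxxdef]
      simp only
      rw [if_neg (by omega)]
      exact one_zpow _
    rw [show SkewAux.conv q bf d n = SkewAux.conv q bf ((d-1)+1) n from by rw [← hdd],
      SkewAux.conv_succ, hgc (d-1) le_rfl, hbfd, one_mul]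
    rcases Nat.eq_zero_or_pos n with rfl | hn
    · rw [if_pos rfl, if_pos rfl, if_neg (by omega : ¬ (0:ℕ) = d), hg0 (d-1) le_rfl]
      try ring
    · rw [if_neg (by omega : ¬ n = 0), if_neg (by omega : ¬ n = 0)]
      rcases lt_trichotomy n d with hlt | heq | hgt
      · rw [htr n hlt, htr (n-1) (by omega), one_pow, if_neg (by omega : ¬ n = d)]
        try ring
      · rw [if_pos heq, hggt (d-1) le_rfl n (by omega), htr (n-1) (by omega), one_pow]
        try ring
      · rw [if_neg (by omega : ¬ n = d), hggt (d-1) le_rfl n (by omega),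
          hggt (d-1) le_rfl (n-1) (by omega), zero_pow hq0]
        try ring
  -- conclusion
  refine ⟨xx, ?_, ?_, ?_⟩
  · rw [hxxdef]
    simp only
    rw [if_neg (by omega)]
  · intro i h1i hid
    rw [hxxdef]
    simp only
    rw [if_pos ⟨h1i, hid⟩]
    exact step_ne (i-1) (by omega) (key (i-1) (by omega))
  · apply h.inj
    funext n
    show c n (1 - τ ^ d) = c n _
    rw [SkewAux.coeff_list_prod h hq0 ι hι xx d n, ← hbfdef, hconv n, map_sub, h.coeff_one,
      SkewAux.coeff_tau_pow h hq0 d n]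
end
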